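/- Let $1 < p, q < \infty$, let $(X,\mu)$ be a $\sigma$-finite measure space, and let $g: X \to \mathbb{C}$ be measurable. Suppose there exists $A < \infty$ such that for every measurable $G \subset X$ with $0 < \mu(G) < \infty$ there exists a measurable $\tilde G \subset X$ with $\mu(\tilde G) \leq \mu(G)/2$ and $\|g \mathbf{1}_{G \setminus \tilde G}\|_{L^{q,\infty}(X)} \leq A\, \mu(G)^{1/q - 1/p}$. Then $\|g\|_{L^{p,\infty}(X)} \leq C_{p,q} A$ for a constant $C_{p,q}$ depending only on $p$ and $q$. -/

import Mathlib

open MeasureTheory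
open scoped ENNReal NNReal

/-- The weak `L^q` quasinorm `‖g‖_{L^{q,∞}} = sup_{λ>0} λ μ({|g|>λ})^{1/q}`. -/
noncomputable def weakLpNorm {X : Type*} [MeasurableSpace X] (μ : Measure X)
    (g : X → ℂ) (q : ℝ) : ℝ≥0∞ :=
  ⨆ l : NNReal, (l : ℝ≥0∞) * μ {x | (l : ℝ) < ‖g x‖} ^ (1 / q)

/-- Bateman's extrapolation lemma. -/
theorem stmt_4 (p q : ℝ) (hp : 1 < p) (hq : 1 < q) :
    ∃ C : ℝ, 0 < C ∧
      ∀ (X : Type) (_ : MeasurableSpace X) (μ : Measure X), SigmaFinite μ →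
        ∀ (g : X → ℂ), Measurable g →
          ∀ (A : ℝ), 0 ≤ A →
            (∀ G : Set X, MeasurableSet G → 0 < μ G → μ G < ⊤ →
              ∃ Gt : Set X, MeasurableSet Gt ∧ μ Gt ≤ μ G / 2 ∧
                weakLpNorm μ (Set.indicator (G \ Gt) g) q ≤
                  ENNReal.ofReal A * μ G ^ (1 / q - 1 / p)) →
            weakLpNorm μ g p ≤ ENNReal.ofReal (C * A) := by
  refine ⟨2, by norm_num, ?_⟩
  intro X mX μ hσ g hg A hA hyp
  have hp0 : (0:ℝ) < 1/p := by positivity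
  have hq0 : (0:ℝ) < 1/q := by positivity
  have h2q0 : (2:ℝ≥0∞) ^ (1/q) ≠ 0 := (ENNReal.rpow_pos (by norm_num) (by norm_num)).ne'
  have h2qT : (2:ℝ≥0∞) ^ (1/q) ≠ ⊤ := ENNReal.rpow_ne_top_of_nonneg hq0.le (by norm_num)
  set A' : ℝ≥0∞ := ENNReal.ofReal A with hA'
  have key : ∀ l : ℝ≥0, (l : ℝ≥0∞) * μ {x | (l : ℝ) < ‖g x‖} ^ (1/p) ≤
      (2:ℝ≥0∞) ^ (1/q) * A' := by
    intro l
    rcases eq_or_ne l 0 with rfl | hl0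
    · simp
    have hlT : (l : ℝ≥0∞) ≠ ⊤ := ENNReal.coe_ne_top
    set E : Set X := {x | (l : ℝ) < ‖g x‖} with hE
    have hEm : MeasurableSet E := measurableSet_lt measurable_const hg.norm
    -- core claim for finite-measure subsets of E
    have core : ∀ F : Set X, MeasurableSet F → F ⊆ E → μ F < ⊤ →
        (l : ℝ≥0∞) * μ F ^ (1/p) ≤ (2:ℝ≥0∞) ^ (1/q) * A' := by
      intro F hFm hFE hFfin
      rcases eq_or_ne (μ F) 0 with h0 | hpos
      · rw [h0, ENNReal.zero_rpow_of_pos hp0, mul_zero]; exact zero_le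
      obtain ⟨Gt, hGtm, h1, h2⟩ := hyp F hFm (pos_iff_ne_zero.mpr hpos) hFfin
      set a := μ F with ha
      have haT : a ≠ ⊤ := hFfin.ne
      -- step a : l * μ(F \ Gt)^{1/q} ≤ A' * a^{1/q-1/p}
      have hsub : F \ Gt ⊆ {x | (l : ℝ) < ‖(Set.indicator (F \ Gt) g) x‖} := by
        intro x hx
        have := hFE hx.1
        simpa [Set.indicator_of_mem hx] using (show (l : ℝ) < ‖g x‖ from this)
      have stepa : (l : ℝ≥0∞) * μ (F \ Gt) ^ (1/q) ≤ A' * a ^ (1/q - 1/p) := by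
        refine le_trans ?_ h2
        refine le_trans ?_ (le_iSup (fun l' : ℝ≥0 =>
          (l' : ℝ≥0∞) * μ {x | (l' : ℝ) < ‖(Set.indicator (F \ Gt) g) x‖} ^ (1/q)) l)
        exact mul_le_mul_right (ENNReal.rpow_le_rpow (measure_mono hsub) hq0.le) _
      -- step b : a / 2 ≤ μ (F \ Gt)
      have stepb : a / 2 ≤ μ (F \ Gt) := by
        have hcov : F ⊆ (F \ Gt) ∪ Gt := by
          intro x hx
          by_cases hxg : x ∈ Gt
          · exact Or.inr hxg
          · exact Or.inl ⟨hx, hxg⟩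
        have h3 : a ≤ μ (F \ Gt) + a / 2 :=
          ((measure_mono hcov).trans (measure_union_le _ _)).trans (add_le_add_right h1 _)
        have := tsub_le_iff_right.mpr h3
        rwa [ENNReal.sub_half haT] at this
      have h4 : (l : ℝ≥0∞) * (a / 2) ^ (1/q) ≤ A' * a ^ (1/q - 1/p) :=
        le_trans (mul_le_mul_right (ENNReal.rpow_le_rpow stepb hq0.le) _) stepa
      -- algebra: multiply both sides by c := 2^{1/q} * a^{1/p - 1/q}
      have key2 := mul_le_mul_left h4 ((2:ℝ≥0∞) ^ (1/q) * a ^ (1/p - 1/q))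
      have e1 : (l : ℝ≥0∞) * (a / 2) ^ (1/q) * ((2:ℝ≥0∞) ^ (1/q) * a ^ (1/p - 1/q))
          = (l : ℝ≥0∞) * a ^ (1/p) := by
        rw [ENNReal.div_rpow_of_nonneg _ _ hq0.le, div_eq_mul_inv]
        calc (l : ℝ≥0∞) * (a ^ (1/q) * ((2:ℝ≥0∞) ^ (1/q))⁻¹) *
              ((2:ℝ≥0∞) ^ (1/q) * a ^ (1/p - 1/q))
            = (l : ℝ≥0∞) * (a ^ (1/q) * a ^ (1/p - 1/q)) *
              (((2:ℝ≥0∞) ^ (1/q))⁻¹ * (2:ℝ≥0∞) ^ (1/q)) := by ring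
          _ = (l : ℝ≥0∞) * a ^ (1/p) := by
              rw [← ENNReal.rpow_add _ _ hpos haT, ENNReal.inv_mul_cancel h2q0 h2qT,
                mul_one]
              norm_num
      have e2 : A' * a ^ (1/q - 1/p) * ((2:ℝ≥0∞) ^ (1/q) * a ^ (1/p - 1/q))
          = (2:ℝ≥0∞) ^ (1/q) * A' := by
        calc A' * a ^ (1/q - 1/p) * ((2:ℝ≥0∞) ^ (1/q) * a ^ (1/p - 1/q))
            = (2:ℝ≥0∞) ^ (1/q) * A' * (a ^ (1/q - 1/p) * a ^ (1/p - 1/q)) := by ring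
          _ = (2:ℝ≥0∞) ^ (1/q) * A' := by
              rw [← ENNReal.rpow_add _ _ hpos haT]
              norm_num
      rw [e1, e2] at key2
      exact key2
    -- pass to all of E via σ-finiteness
    set M : ℝ≥0∞ := ((2:ℝ≥0∞) ^ (1/q) * A' / l) ^ p with hM
    have hME : μ E ≤ M := by
      rw [← Measure.iSup_restrict_spanningSets E]
      refine iSup_le fun n => ?_
      rw [Measure.restrict_apply hEm]
      set F := E ∩ spanningSets μ n with hF
      have hFfin : μ F < ⊤ :=
        (measure_mono Set.inter_subset_right).trans_lt (measure_spanningSets_lt_top μ n)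
      have hle := core F (hEm.inter (measurableSet_spanningSets μ n))
        Set.inter_subset_left hFfin
      have h5 : μ F ^ (1/p) ≤ (2:ℝ≥0∞) ^ (1/q) * A' / l := by
        rw [ENNReal.le_div_iff_mul_le (Or.inl (by exact_mod_cast hl0))
          (Or.inl hlT)]
        rwa [mul_comm]
      calc μ F = (μ F ^ (1/p)) ^ p := by
            rw [← ENNReal.rpow_mul]
            rw [one_div, inv_mul_cancel₀ (by positivity : p ≠ 0), ENNReal.rpow_one]
        _ ≤ M := ENNReal.rpow_le_rpow h5 (by positivity)
    have h6 : μ E ^ (1/p) ≤ (2:ℝ≥0∞) ^ (1/q) * A' / l := by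
      calc μ E ^ (1/p) ≤ M ^ (1/p) := ENNReal.rpow_le_rpow hME hp0.le
        _ = (2:ℝ≥0∞) ^ (1/q) * A' / l := by
            rw [hM, ← ENNReal.rpow_mul, mul_one_div, div_self (by positivity : p ≠ 0),
              ENNReal.rpow_one]
    calc (l : ℝ≥0∞) * μ E ^ (1/p) ≤ (l : ℝ≥0∞) * ((2:ℝ≥0∞) ^ (1/q) * A' / l) :=
          mul_le_mul_right h6 _
      _ ≤ (2:ℝ≥0∞) ^ (1/q) * A' := ENNReal.mul_div_le
  have hfin : weakLpNorm μ g p ≤ (2:ℝ≥0∞) ^ (1/q) * A' := iSup_le key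
  refine hfin.trans ?_
  have h2le : (2:ℝ≥0∞) ^ (1/q) ≤ 2 := by
    calc (2:ℝ≥0∞) ^ (1/q) ≤ (2:ℝ≥0∞) ^ (1:ℝ) :=
          ENNReal.rpow_le_rpow_of_exponent_le (by norm_num) (by
            rw [div_le_one (by linarith)]; linarith)
      _ = 2 := ENNReal.rpow_one 2
  calc (2:ℝ≥0∞) ^ (1/q) * A' ≤ 2 * A' := mul_le_mul_left h2le _
    _ = ENNReal.ofReal (2 * A) := by
        rw [ENNReal.ofReal_mul (by norm_num)]
        norm_num
        rw [hA']
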